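/- Suppose U : [-π, π] → ℝ is continuously differentiable on (-π, π), satisfies U(z) < c for all z ∈ (-π, π), U(±π) = c with c > 0, ∫_{-π}^{π} U = 0, U is even, U'(0) = 0, and U satisfies (c - U(z)) U'(z) + ∫_0^z U(s) ds = 0 on (-π, π). Then c = π^2/9 and U(z) = (z^2 - 3c)/6 = (3z^2 - π^2)/18 for all z ∈ [-π, π]. -/

import Mathlib

open Real

theorem uniqueness_of_peaked_wave
    (c : ℝ) (hc : 0 < c) (U U' : ℝ → ℝ)
    (hUcont : ContinuousOn U (Set.Icc (-π) π))
    (hU'cont : ContinuousOn U' (Set.Ioo (-π) π))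
    (hderiv : ∀ z ∈ Set.Ioo (-π) π, HasDerivAt U (U' z) z)
    (hlt : ∀ z ∈ Set.Ioo (-π) π, U z < c)
    (hpi : U π = c) (hmpi : U (-π) = c)
    (hmean : ∫ z in (-π)..π, U z = 0)
    (heven : ∀ z, U (-z) = U z)
    (hzero : U' 0 = 0)
    (heq : ∀ z ∈ Set.Ioo (-π) π,
      (c - U z) * U' z + ∫ s in (0 : ℝ)..z, U s = 0) :
    c = π ^ 2 / 9 ∧ ∀ z ∈ Set.Icc (-π) π, U z = (3 * z ^ 2 - π ^ 2) / 18 := by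
  have hπ : (0 : ℝ) < π := Real.pi_pos
  have h0mem : (0 : ℝ) ∈ Set.Ioo (-π) π := ⟨by linarith, hπ⟩
  set F : ℝ → ℝ := fun z => ∫ s in (0:ℝ)..z, U s with hFdef
  -- continuity of U at interior points
  have hUat : ∀ z ∈ Set.Ioo (-π) π, ContinuousAt U z := fun z hz =>
    hUcont.continuousAt (Icc_mem_nhds hz.1 hz.2)
  -- interval integrability
  have hUint : ∀ a b : ℝ, a ∈ Set.Icc (-π) π → b ∈ Set.Icc (-π) π →
      IntervalIntegrable U MeasureTheory.volume a b := fun a b ha hb =>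
    (hUcont.mono (Set.uIcc_subset_Icc ha hb)).intervalIntegrable
  have h0Icc : (0 : ℝ) ∈ Set.Icc (-π) π := ⟨by linarith, le_of_lt hπ⟩
  -- derivative of F
  have hFderiv : ∀ z ∈ Set.Ioo (-π) π, HasDerivAt F (U z) z := by
    intro z hz
    exact intervalIntegral.integral_hasDerivAt_right
      (hUint 0 z h0Icc ⟨le_of_lt hz.1, le_of_lt hz.2⟩)
      (ContinuousAt.stronglyMeasurableAtFilter isOpen_Ioo
        (fun x hx => hUat x hx) z hz)
      (hUat z hz)
  -- continuity of F on the closed interval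
  have hFcont : ContinuousOn F (Set.Icc (-π) π) := by
    have h := intervalIntegral.continuousOn_primitive_interval'
      (hUint (-π) π (Set.left_mem_Icc.2 (by linarith)) (Set.right_mem_Icc.2 (by linarith)))
      (a := 0) (by rw [Set.uIcc_of_le (by linarith : -π ≤ π)]; exact h0Icc)
    rwa [Set.uIcc_of_le (by linarith : -π ≤ π)] at h
  -- F π = 0
  have hFpi : F π = 0 := by
    have hsplit : (∫ z in (-π)..(0:ℝ), U z) + ∫ z in (0:ℝ)..π, U z = ∫ z in (-π)..π, U z :=
      intervalIntegral.integral_add_adjacent_intervals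
        (hUint (-π) 0 (Set.left_mem_Icc.2 (by linarith)) h0Icc)
        (hUint 0 π h0Icc (Set.right_mem_Icc.2 (by linarith)))
    have hrefl : (∫ z in (-π)..(0:ℝ), U z) = ∫ z in (0:ℝ)..π, U z := by
      have : (∫ z in (0:ℝ)..π, U (-z)) = ∫ z in (-π)..(0:ℝ), U z := by
        simpa using intervalIntegral.integral_comp_neg (a := (0:ℝ)) (b := π) (f := U)
      rw [← this]
      congr 1
      ext z
      rw [heven]
    have : F π = ∫ z in (0:ℝ)..π, U z := rfl
    rw [this]
    rw [hrefl] at hsplit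
    rw [hmean] at hsplit
    linarith
  -- the energy function
  set E : ℝ → ℝ := fun z => (F z) ^ 2 - c * (c - U z) ^ 2 + (2/3) * (c - U z) ^ 3 with hEdef
  have hEderiv : ∀ z ∈ Set.Ioo (-π) π, HasDerivAt E 0 z := by
    intro z hz
    have h1 : HasDerivAt (fun z => (F z) ^ 2) (2 * F z * U z) z := by
      exact ((hFderiv z hz).pow 2).congr_deriv (by norm_num)
    have hV : HasDerivAt (fun z => c - U z) (-U' z) z := by
      simpa using ((hderiv z hz).const_sub c)
    have h2 : HasDerivAt (fun z => c * (c - U z) ^ 2) (c * (2 * (c - U z) * (-U' z))) z := by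
      exact (hV.pow 2).const_mul c |>.congr_deriv (by ring)
    have h3 : HasDerivAt (fun z => (2/3) * (c - U z) ^ 3)
        ((2/3) * (3 * (c - U z) ^ 2 * (-U' z))) z := by
      exact (hV.pow 3).const_mul (2/3) |>.congr_deriv (by ring)
    have := (h1.sub h2).add h3
    refine this.congr_deriv ?_
    have hq := heq z hz
    simp only [hFdef] at *
    linear_combination (2 * U z) * hq
  -- E vanishes on the interior
  have hEcont : ContinuousOn E (Set.Icc (-π) π) := by
    apply ContinuousOn.add
    · exact (hFcont.pow 2).sub (((continuousOn_const.sub hUcont).pow 2).const_smul c)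
    · exact ((continuousOn_const.sub hUcont).pow 3).const_smul (2/3 : ℝ)
  have hEpi : E π = 0 := by
    simp only [hEdef, hpi, hFpi]
    ring
  have hEzero : ∀ z ∈ Set.Ioo (-π) π, E z = 0 := by
    intro z hz
    have key := constant_of_has_deriv_right_zero
      (f := E) (a := z) (b := π)
      (hEcont.mono (Set.Icc_subset_Icc (le_of_lt hz.1) le_rfl))
      (fun x hx => ((hEderiv x ⟨lt_of_lt_of_le hz.1 hx.1, hx.2⟩).hasDerivWithinAt))
      π (Set.right_mem_Icc.2 (le_of_lt hz.2))
    rw [hEpi] at key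
    linarith [key]
  -- first-order equation: (U' z)^2 = c - (2/3)*(c - U z)
  have hsq : ∀ z ∈ Set.Ioo (-π) π, (U' z) ^ 2 = c - (2/3) * (c - U z) := by
    intro z hz
    have hE : F z ^ 2 - c * (c - U z) ^ 2 + 2 / 3 * (c - U z) ^ 3 = 0 := hEzero z hz
    have hq := heq z hz
    have hV : 0 < c - U z := by linarith [hlt z hz]
    have hF : F z = -((c - U z) * U' z) := by
      simp only [hFdef]; linarith [hq]
    rw [hF] at hE
    have h2 : (c - U z) ^ 2 * ((U' z) ^ 2 - (c - (2/3) * (c - U z))) = 0 := by ring_nf; nlinarith [hE]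
    have h3 : (c - U z) ^ 2 ≠ 0 := pow_ne_zero 2 (ne_of_gt hV)
    have := (mul_eq_zero.mp h2).resolve_left h3
    linarith
  -- value at 0
  have hU0 : U 0 = -c / 2 := by
    have := hsq 0 h0mem
    rw [hzero] at this
    norm_num at this
    linarith
  -- U' is differentiable with derivative 1/3
  have hU'' : ∀ z ∈ Set.Ioo (-π) π, HasDerivAt U' (1/3) z := by
    intro z hz
    have hV : 0 < c - U z := by linarith [hlt z hz]
    set g : ℝ → ℝ := fun z => -F z / (c - U z) with hgdef
    have hgU' : ∀ x ∈ Set.Ioo (-π) π, g x = U' x := by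
      intro x hx
      have hq := heq x hx
      have hVx : 0 < c - U x := by linarith [hlt x hx]
      simp only [hgdef]; rw [div_eq_iff (ne_of_gt hVx)]
      simp only [hFdef] at *
      linarith
    have hgd : HasDerivAt g
        ((-U z * (c - U z) - (-F z) * (-U' z)) / (c - U z) ^ 2) z := by
      exact ((hFderiv z hz).neg).div ((hderiv z hz).const_sub c) (ne_of_gt hV)
    have heqfun : U' =ᶠ[nhds z] g :=
      Filter.eventuallyEq_of_mem (isOpen_Ioo.mem_nhds hz) (fun x hx => (hgU' x hx).symm)
    have hval : (-U z * (c - U z) - (-F z) * (-U' z)) / (c - U z) ^ 2 = 1/3 := by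
      have hF : F z = -((c - U z) * U' z) := by
        simp only [hFdef]; linarith [heq z hz]
      have hs := hsq z hz
      rw [hF]
      rw [div_eq_iff (pow_ne_zero 2 (ne_of_gt hV))]
      nlinarith [hs]
    rw [← hval]
    exact hgd.congr_of_eventuallyEq heqfun
  -- U' z = z / 3 on [0, π)
  have hU'eq : ∀ z ∈ Set.Ico (0:ℝ) π, U' z = z / 3 := by
    intro z hz
    rcases eq_or_lt_of_le hz.1 with h | h
    · rw [← h, hzero]; norm_num
    · have hsub : Set.Icc (0:ℝ) z ⊆ Set.Ioo (-π) π :=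
        fun x hx => ⟨by linarith [hx.1], lt_of_le_of_lt hx.2 hz.2⟩
      have key := constant_of_has_deriv_right_zero
        (f := fun t => U' t - t / 3) (a := 0) (b := z)
        ((hU'cont.mono hsub).sub (continuousOn_id.div_const 3))
        (fun x hx => by
          have := (hU'' x (hsub ⟨hx.1, le_of_lt hx.2⟩)).sub
            ((hasDerivAt_id x).div_const 3)
          exact (this.congr_deriv (sub_self _)).hasDerivWithinAt)
        z (Set.right_mem_Icc.2 (le_of_lt h))
      simp only [hzero] at key
      have : U' z - z / 3 = 0 - 0 / 3 := key
      simp at this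
      linarith
  -- U z = U 0 + z^2 / 6 on [0, π]
  have hUq : ∀ z ∈ Set.Icc (0:ℝ) π, U z = U 0 + z ^ 2 / 6 := by
    have key := constant_of_has_deriv_right_zero
      (f := fun t => U t - t ^ 2 / 6) (a := 0) (b := π)
      ((hUcont.mono (Set.Icc_subset_Icc (by linarith) le_rfl)).sub
        ((continuousOn_id.pow 2).div_const 6))
      (fun x hx => by
        have hxI : x ∈ Set.Ioo (-π) π := ⟨by linarith [hx.1], hx.2⟩
        have h2 : HasDerivAt (fun t : ℝ => t ^ 2 / 6) (x / 3) x := by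
          have := (hasDerivAt_pow 2 x).div_const 6
          exact this.congr_deriv (by simp only [Nat.cast_ofNat, show (2:ℕ) - 1 = 1 from rfl, pow_one]; ring)
        have hd := (hderiv x hxI).sub h2
        rw [hU'eq x hx, sub_self] at hd
        exact hd.hasDerivWithinAt)
    intro z hz
    have := key z hz
    linarith [this]
  -- conclusion on c
  have hcval : c = π ^ 2 / 9 := by
    have := hUq π (Set.right_mem_Icc.2 (le_of_lt hπ))
    rw [hpi, hU0] at this
    linarith
  refine ⟨hcval, ?_⟩
  intro z hz
  have habs : ∀ y ∈ Set.Icc (0:ℝ) π, U y = (3 * y ^ 2 - π ^ 2) / 18 := by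
    intro y hy
    rw [hUq y hy, hU0, hcval]
    ring
  rcases le_or_gt 0 z with h | h
  · exact habs z ⟨h, hz.2⟩
  · rw [← heven z]
    exact (habs (-z) ⟨by linarith, by linarith [hz.1]⟩).trans (by ring_nf)
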